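/- For k ≥ 1 and f ∈ L²(0,1), the solution u of the Helmholtz boundary value problem u'' + k²u = -f, u(0)=0, u'(1) - iku(1) = 0 satisfies ‖u‖_{L²} ≤ k⁻¹ ‖f‖_{L²}, ‖u'‖_{L²} ≤ ‖f‖_{L²}, and ‖u''‖_{L²} ≤ (1+k) ‖f‖_{L²}. -/

import Mathlib

open MeasureTheory

theorem helmholtz_stability_estimates
    (k : ℝ) (hk : 1 ≤ k)
    (f u : ℝ → ℂ)
    (hf : MemLp f 2 (volume.restrict (Set.Ioo (0:ℝ) 1)))
    (hreg : ContDiff ℝ 2 u)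
    (heq : ∀ x ∈ Set.Ioo (0:ℝ) 1, deriv (deriv u) x + (k:ℂ)^2 * u x = - f x)
    (hbc0 : u 0 = 0)
    (hbc1 : deriv u 1 - Complex.I * (k:ℂ) * u 1 = 0) :
    eLpNorm u 2 (volume.restrict (Set.Ioo (0:ℝ) 1)) ≤
      ENNReal.ofReal k⁻¹ * eLpNorm f 2 (volume.restrict (Set.Ioo (0:ℝ) 1)) ∧
    eLpNorm (deriv u) 2 (volume.restrict (Set.Ioo (0:ℝ) 1)) ≤
      eLpNorm f 2 (volume.restrict (Set.Ioo (0:ℝ) 1)) ∧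
    eLpNorm (deriv (deriv u)) 2 (volume.restrict (Set.Ioo (0:ℝ) 1)) ≤
      ENNReal.ofReal (1 + k) * eLpNorm f 2 (volume.restrict (Set.Ioo (0:ℝ) 1)) := by
  have hk0 : (0:ℝ) < k := lt_of_lt_of_le one_pos hk
  -- regularity
  have hdu : Differentiable ℝ u := hreg.differentiable (by norm_num)
  have h1 : ContDiff ℝ 1 (deriv u) :=
    ((contDiff_succ_iff_deriv (n := 1)).mp (by exact_mod_cast hreg)).2.2
  have hdu' : Differentiable ℝ (deriv u) := h1.differentiable (by norm_num)
  have huc : Continuous u := hdu.continuous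
  have hu'c : Continuous (deriv u) := hdu'.continuous
  have hu''c : Continuous (deriv (deriv u)) :=
    ((contDiff_succ_iff_deriv (n := 0)).mp (by exact_mod_cast h1)).2.2.continuous
  set c : ℂ := Complex.I * k with hc
  have hcsq : c^2 = -(k:ℂ)^2 := by rw [hc]; ring_nf; rw [Complex.I_sq]; ring
  have hcnorm : ‖c‖ = k := by
    rw [hc]; simp [norm_mul, Complex.norm_real, abs_of_pos hk0]
  have hcne : c ≠ 0 := by
    rw [hc]; exact mul_ne_zero Complex.I_ne_zero (by exact_mod_cast hk0.ne')
  set g : ℝ → ℂ := fun x => -(deriv (deriv u) x + (k:ℂ)^2 * u x) with hgdef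
  have hgc : Continuous g := (hu''c.add (continuous_const.mul huc)).neg
  have hfg : ∀ x ∈ Set.Ioo (0:ℝ) 1, f x = g x := by
    intro x hx; have := heq x hx; rw [hgdef]; simp only []; rw [this]; ring
  -- norm of exponentials
  have hexp : ∀ x : ℝ, ‖Complex.exp (c * x)‖ = 1 := by
    intro x
    rw [Complex.norm_exp]
    have : (c * x).re = 0 := by rw [hc]; simp
    rw [this, Real.exp_zero]
  have hexp' : ∀ x : ℝ, ‖Complex.exp (-(c * x))‖ = 1 := by
    intro x
    rw [Complex.norm_exp]
    have : (-(c * x)).re = 0 := by rw [hc]; simp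
    rw [this, Real.exp_zero]
  -- the auxiliary integrals
  set E : ℝ → ℂ := fun t => Complex.exp (c * t) * g t with hEdef
  set E' : ℝ → ℂ := fun t => Complex.exp (-(c * t)) * g t with hE'def
  have hEc : Continuous E := (Complex.continuous_exp.comp (continuous_const.mul Complex.continuous_ofReal)).mul hgc
  have hE'c : Continuous E' := ((Complex.continuous_exp.comp ((continuous_const.mul Complex.continuous_ofReal).neg))).mul hgc
  set h : ℝ → ℂ := fun x => ∫ t in x..(1:ℝ), E t with hhdef
  set q : ℝ → ℂ := fun x => ∫ t in (0:ℝ)..x, E' t with hqdef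
  have hhderiv : ∀ x : ℝ, HasDerivAt h (-(E x)) x := by
    intro x
    have h0 : h = fun x => (∫ t in (0:ℝ)..(1:ℝ), E t) - ∫ t in (0:ℝ)..x, E t := by
      funext y
      exact (intervalIntegral.integral_interval_sub_left (hEc.intervalIntegrable 0 1)
        (hEc.intervalIntegrable 0 y)).symm
    rw [h0]
    have := intervalIntegral.integral_hasDerivAt_right (f := E) (a := (0:ℝ)) (b := x)
      (hEc.intervalIntegrable _ _) (hEc.stronglyMeasurableAtFilter _ _) hEc.continuousAt
    exact ((hasDerivAt_const x _).sub this).congr_deriv (by simp)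
  have hqderiv : ∀ x : ℝ, HasDerivAt q (E' x) x := fun x =>
    intervalIntegral.integral_hasDerivAt_right (hE'c.intervalIntegrable _ _)
      (hE'c.stronglyMeasurableAtFilter _ _) hE'c.continuousAt
  -- basic derivative facts
  have hexpD : ∀ t : ℝ, HasDerivAt (fun x : ℝ => Complex.exp (c * x)) (c * Complex.exp (c * t)) t := by
    intro t
    have h1 : HasDerivAt (fun x : ℝ => c * (x : ℂ)) c t := by
      simpa using (Complex.ofRealCLM.hasDerivAt (x := t)).const_mul c
    simpa [mul_comm] using h1.cexp
  have hexpD' : ∀ t : ℝ, HasDerivAt (fun x : ℝ => Complex.exp (-(c * x))) (-c * Complex.exp (-(c * t))) t := by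
    intro t
    have h1 : HasDerivAt (fun x : ℝ => -(c * (x : ℂ))) (-c) t := by
      exact ((Complex.ofRealCLM.hasDerivAt (x := t)).const_mul c).neg.congr_deriv (by simp)
    simpa [mul_comm] using h1.cexp
  have hW : ∀ t : ℝ, HasDerivAt (fun x => deriv u x - c * u x)
      (deriv (deriv u) t - c * deriv u t) t := fun t =>
    ((hdu' t).hasDerivAt).sub (((hdu t).hasDerivAt).const_mul c)
  have hphiD : ∀ t : ℝ, HasDerivAt (fun x : ℝ => Complex.exp (c * x) * (deriv u x - c * u x))
      (-(E t)) t := by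
    intro t
    have H := (hexpD t).mul (hW t)
    refine H.congr_deriv (Eq.symm ?_)
    rw [hEdef, hgdef]
    simp only []
    linear_combination (-(Complex.exp (c * (t : ℝ)) * u t)) * hcsq + (2 * Complex.exp (c * (t:ℝ)) * (k:ℂ)^2 * u t) * Complex.I_sq
  -- Step A : deriv u x - c * u x = exp(-cx) * h x
  have stepA : ∀ x : ℝ, deriv u x - c * u x = Complex.exp (-(c * x)) * h x := by
    intro x
    have key : (∫ t in x..(1:ℝ), -(E t)) =
        Complex.exp (c * (1:ℝ)) * (deriv u 1 - c * u 1)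
          - Complex.exp (c * (x:ℝ)) * (deriv u x - c * u x) :=
      intervalIntegral.integral_eq_sub_of_hasDerivAt (fun t _ => hphiD t)
        ((hEc.neg).intervalIntegrable _ _)
    rw [hbc1, mul_zero, zero_sub, intervalIntegral.integral_neg] at key
    have key2 : Complex.exp (c * x) * (deriv u x - c * u x) = h x := by
      rw [hhdef]
      exact (neg_injective key).symm
    calc deriv u x - c * u x
        = (Complex.exp (-(c * x)) * Complex.exp (c * x)) * (deriv u x - c * u x) := by
          rw [← Complex.exp_add]; simp
      _ = Complex.exp (-(c * x)) * h x := by rw [mul_assoc, key2]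
  -- Step B : explicit formula for u
  set P : ℝ → ℂ := fun x =>
    (Complex.exp (c * x) * h 0 - Complex.exp (-(c * x)) * h x) / (2 * c)
      - Complex.exp (c * x) / (2 * c) * q x with hPdef
  have hPder : ∀ x : ℝ, HasDerivAt P (c * P x + Complex.exp (-(c * x)) * h x) x := by
    intro x
    have H := ((((hexpD x).mul_const (h 0)).sub ((hexpD' x).mul (hhderiv x))).div_const (2*c)).sub
      (((hexpD x).div_const (2*c)).mul (hqderiv x))
    refine H.congr_deriv (Eq.symm ?_)
    rw [hPdef, hEdef, hE'def]
    simp only []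
    field_simp
    ring
  have hDder : ∀ x : ℝ, HasDerivAt (fun y : ℝ => Complex.exp (-(c * y)) * (u y - P y)) 0 x := by
    intro x
    have H := (hexpD' x).mul (((hdu x).hasDerivAt).sub (hPder x))
    refine H.congr_deriv (Eq.symm ?_)
    have hA := stepA x
    simp only [Pi.sub_apply]
    linear_combination (-(Complex.exp (-(c * (x:ℝ))))) * hA
  have stepB : ∀ x : ℝ, u x = P x := by
    have hconst : ∀ x : ℝ, Complex.exp (-(c * (x:ℝ))) * (u x - P x)
        = Complex.exp (-(c * ((0:ℝ):ℝ))) * (u 0 - P 0) := by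
      intro x
      exact is_const_of_deriv_eq_zero (fun y => (hDder y).differentiableAt)
        (fun y => (hDder y).deriv) x 0
    have hP0 : P 0 = 0 := by
      rw [hPdef]
      simp only []
      have hq0 : q 0 = 0 := intervalIntegral.integral_same
      rw [hq0]
      simp
    intro x
    have := hconst x
    rw [hbc0, hP0] at this
    simp only [sub_zero, mul_zero] at this
    have hne := Complex.exp_ne_zero (-(c * (x:ℝ)))
    have := mul_eq_zero.mp this
    rcases this with h1 | h2
    · exact absurd h1 hne
    · exact sub_eq_zero.mp h2

  -- pointwise bounds
  set M : ℝ := ∫ t in (0:ℝ)..(1:ℝ), ‖g t‖ with hMdef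
  have hgInt : ∀ a b : ℝ, IntervalIntegrable (fun t => ‖g t‖) volume a b :=
    fun a b => (hgc.norm).intervalIntegrable a b
  have hMsplit : ∀ x : ℝ, (∫ t in (0:ℝ)..x, ‖g t‖) + (∫ t in x..(1:ℝ), ‖g t‖) = M := by
    intro x
    rw [hMdef]
    exact intervalIntegral.integral_add_adjacent_intervals (hgInt 0 x) (hgInt x 1)
  have hhbd : ∀ x : ℝ, x ≤ 1 → ‖h x‖ ≤ ∫ t in x..(1:ℝ), ‖g t‖ := by
    intro x hx
    rw [hhdef]
    refine le_trans (intervalIntegral.norm_integral_le_integral_norm hx) (le_of_eq ?_)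
    apply intervalIntegral.integral_congr
    intro t _
    rw [hEdef]
    simp only []
    rw [norm_mul, hexp t, one_mul]
  have hqbd : ∀ x : ℝ, 0 ≤ x → ‖q x‖ ≤ ∫ t in (0:ℝ)..x, ‖g t‖ := by
    intro x hx
    rw [hqdef]
    refine le_trans (intervalIntegral.norm_integral_le_integral_norm hx) (le_of_eq ?_)
    apply intervalIntegral.integral_congr
    intro t _
    rw [hE'def]
    simp only []
    rw [norm_mul, hexp' t, one_mul]
  have hh0 : ‖h 0‖ ≤ M := by
    have := hhbd 0 zero_le_one
    rw [hMdef]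
    simpa using this
  have h2k : ‖2 * c‖ = 2 * k := by rw [norm_mul, hcnorm]; simp
  have hbounds : ∀ x : ℝ, x ∈ Set.Icc (0:ℝ) 1 →
      ‖h x‖ + ‖q x‖ ≤ M ∧ ‖u x‖ ≤ M / k := by
    intro x hx
    obtain ⟨hx0, hx1⟩ := hx
    have hI0x : (0:ℝ) ≤ ∫ t in (0:ℝ)..x, ‖g t‖ :=
      intervalIntegral.integral_nonneg hx0 (fun t _ => norm_nonneg _)
    have hIx1 : (0:ℝ) ≤ ∫ t in x..(1:ℝ), ‖g t‖ :=
      intervalIntegral.integral_nonneg hx1 (fun t _ => norm_nonneg _)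
    have hsplit := hMsplit x
    have hhx := hhbd x hx1
    have hqx := hqbd x hx0
    have hhq : ‖h x‖ + ‖q x‖ ≤ M := by linarith
    refine ⟨hhq, ?_⟩
    have e1 : ‖Complex.exp (c * (x:ℝ)) * h 0‖ = ‖h 0‖ := by rw [norm_mul, hexp, one_mul]
    have e2 : ‖Complex.exp (-(c * (x:ℝ))) * h x‖ = ‖h x‖ := by rw [norm_mul, hexp', one_mul]
    have e3 : ‖Complex.exp (c * (x:ℝ)) / (2 * c) * q x‖ = ‖q x‖ / (2 * k) := by
      rw [norm_mul, norm_div, hexp x, h2k]; ring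
    have hPx : ‖P x‖ ≤ M / k := by
      rw [hPdef]
      simp only []
      calc ‖(Complex.exp (c * x) * h 0 - Complex.exp (-(c * x)) * h x) / (2 * c)
            - Complex.exp (c * x) / (2 * c) * q x‖
          ≤ ‖(Complex.exp (c * x) * h 0 - Complex.exp (-(c * x)) * h x) / (2 * c)‖
            + ‖Complex.exp (c * x) / (2 * c) * q x‖ := norm_sub_le _ _
        _ = ‖Complex.exp (c * x) * h 0 - Complex.exp (-(c * x)) * h x‖ / (2 * k)
            + ‖q x‖ / (2 * k) := by rw [norm_div, h2k, e3]
        _ ≤ (‖h 0‖ + ‖h x‖) / (2 * k) + ‖q x‖ / (2 * k) := by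
            gcongr
            exact (norm_sub_le _ _).trans (by rw [e1, e2])
        _ ≤ M / k := by
            rw [← add_div, div_le_div_iff₀ (by positivity) hk0]
            nlinarith [norm_nonneg (q x), norm_nonneg (h x)]
    rw [stepB x]
    exact hPx
  have hubd : ∀ x ∈ Set.Icc (0:ℝ) 1, ‖u x‖ ≤ M / k := fun x hx => (hbounds x hx).2
  have hu'2 : ∀ x : ℝ, 2 * deriv u x = Complex.exp (c * (x:ℝ)) * h 0
      + Complex.exp (-(c * (x:ℝ))) * h x - Complex.exp (c * (x:ℝ)) * q x := by
    intro x
    have hA := stepA x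
    have hB := stepB x
    rw [hPdef] at hB
    simp only [] at hB
    have hB2 : 2 * c * u x = Complex.exp (c * (x:ℝ)) * h 0
        - Complex.exp (-(c * (x:ℝ))) * h x - Complex.exp (c * (x:ℝ)) * q x := by
      field_simp [hcne] at hB
      linear_combination hB
    linear_combination 2 * hA + hB2
  have hu'bd : ∀ x ∈ Set.Icc (0:ℝ) 1, ‖deriv u x‖ ≤ M := by
    intro x hx
    have hhq := (hbounds x hx).1
    have h2 : ‖2 * deriv u x‖ ≤ ‖h 0‖ + ‖h x‖ + ‖q x‖ := by
      rw [hu'2 x]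
      refine le_trans (norm_sub_le _ _) ?_
      gcongr
      · refine le_trans (norm_add_le _ _) ?_
        rw [norm_mul, hexp, one_mul, norm_mul, hexp', one_mul]
      · rw [norm_mul, hexp, one_mul]
    have h3 : ‖(2:ℂ) * deriv u x‖ = 2 * ‖deriv u x‖ := by
      rw [norm_mul]; simp
    rw [h3] at h2
    linarith
  -- measure-theoretic conclusion
  have hMnn : 0 ≤ M := by
    rw [hMdef]; exact intervalIntegral.integral_nonneg zero_le_one (fun t _ => norm_nonneg _)
  haveI hprob : IsProbabilityMeasure (volume.restrict (Set.Ioo (0:ℝ) 1)) := by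
    constructor
    rw [Measure.restrict_apply_univ, Real.volume_Ioo]
    norm_num
  have hfg' : f =ᵐ[volume.restrict (Set.Ioo (0:ℝ) 1)] g := by
    filter_upwards [ae_restrict_mem measurableSet_Ioo] with x hx using hfg x hx
  have hFeq : eLpNorm f 2 (volume.restrict (Set.Ioo (0:ℝ) 1))
      = eLpNorm g 2 (volume.restrict (Set.Ioo (0:ℝ) 1)) := eLpNorm_congr_ae hfg'
  have hgint : Integrable g (volume.restrict (Set.Ioo (0:ℝ) 1)) :=
    (hgc.integrableOn_Icc).mono_set Set.Ioo_subset_Icc_self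
  have hMle : ENNReal.ofReal M ≤ eLpNorm g 2 (volume.restrict (Set.Ioo (0:ℝ) 1)) := by
    have h1 : ENNReal.ofReal M = eLpNorm g 1 (volume.restrict (Set.Ioo (0:ℝ) 1)) := by
      rw [eLpNorm_one_eq_lintegral_enorm, ← ofReal_integral_norm_eq_lintegral_enorm hgint]
      congr 1
      rw [hMdef, intervalIntegral.integral_of_le zero_le_one, integral_Ioc_eq_integral_Ioo]
    rw [h1]
    exact eLpNorm_le_eLpNorm_of_exponent_le one_le_two (hgc.aestronglyMeasurable.restrict)
  have goal1 : eLpNorm u 2 (volume.restrict (Set.Ioo (0:ℝ) 1)) ≤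
      ENNReal.ofReal k⁻¹ * eLpNorm f 2 (volume.restrict (Set.Ioo (0:ℝ) 1)) := by
    have hb : ∀ᵐ x ∂(volume.restrict (Set.Ioo (0:ℝ) 1)), ‖u x‖ ≤ M / k := by
      filter_upwards [ae_restrict_mem measurableSet_Ioo] with x hx
      exact hubd x (Set.mem_Icc_of_Ioo hx)
    calc eLpNorm u 2 (volume.restrict (Set.Ioo (0:ℝ) 1))
        ≤ ENNReal.ofReal (M / k) := by simpa using eLpNorm_le_of_ae_bound hb
      _ = ENNReal.ofReal k⁻¹ * ENNReal.ofReal M := by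
          rw [← ENNReal.ofReal_mul (by positivity)]
          congr 1
          field_simp
      _ ≤ ENNReal.ofReal k⁻¹ * eLpNorm g 2 (volume.restrict (Set.Ioo (0:ℝ) 1)) :=
          mul_le_mul_right hMle _
      _ = ENNReal.ofReal k⁻¹ * eLpNorm f 2 (volume.restrict (Set.Ioo (0:ℝ) 1)) := by rw [hFeq]
  have goal2 : eLpNorm (deriv u) 2 (volume.restrict (Set.Ioo (0:ℝ) 1)) ≤
      eLpNorm f 2 (volume.restrict (Set.Ioo (0:ℝ) 1)) := by
    have hb : ∀ᵐ x ∂(volume.restrict (Set.Ioo (0:ℝ) 1)), ‖deriv u x‖ ≤ M := by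
      filter_upwards [ae_restrict_mem measurableSet_Ioo] with x hx
      exact hu'bd x (Set.mem_Icc_of_Ioo hx)
    calc eLpNorm (deriv u) 2 (volume.restrict (Set.Ioo (0:ℝ) 1))
        ≤ ENNReal.ofReal M := by simpa using eLpNorm_le_of_ae_bound hb
      _ ≤ eLpNorm g 2 (volume.restrict (Set.Ioo (0:ℝ) 1)) := hMle
      _ = eLpNorm f 2 (volume.restrict (Set.Ioo (0:ℝ) 1)) := hFeq.symm
  refine ⟨goal1, goal2, ?_⟩
  have hdd : deriv (deriv u) = (-g) - (((k:ℂ)^2) • u) := by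
    funext x
    rw [hgdef]
    simp only [Pi.sub_apply, Pi.neg_apply, Pi.smul_apply, smul_eq_mul]
    ring
  have hnn : ((‖(k:ℂ)^2‖₊ : NNReal) : ENNReal) = ENNReal.ofReal (k^2) := by
    have : ‖(k:ℂ)^2‖ = k^2 := by
      rw [norm_pow, Complex.norm_real, Real.norm_eq_abs, abs_of_pos hk0]
    rw [← enorm_eq_nnnorm, ← ofReal_norm, this]
  rw [hdd]
  calc eLpNorm ((-g) - (((k:ℂ)^2) • u)) 2 (volume.restrict (Set.Ioo (0:ℝ) 1))
      ≤ eLpNorm (-g) 2 (volume.restrict (Set.Ioo (0:ℝ) 1))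
        + eLpNorm (((k:ℂ)^2) • u) 2 (volume.restrict (Set.Ioo (0:ℝ) 1)) :=
        eLpNorm_sub_le (hgc.neg.aestronglyMeasurable.restrict)
          ((huc.const_smul ((k:ℂ)^2)).aestronglyMeasurable.restrict) one_le_two
    _ = eLpNorm g 2 (volume.restrict (Set.Ioo (0:ℝ) 1))
        + ENNReal.ofReal (k^2) * eLpNorm u 2 (volume.restrict (Set.Ioo (0:ℝ) 1)) := by
        rw [eLpNorm_neg, eLpNorm_const_smul, enorm_eq_nnnorm, hnn]
    _ ≤ eLpNorm f 2 (volume.restrict (Set.Ioo (0:ℝ) 1))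
        + ENNReal.ofReal (k^2) * (ENNReal.ofReal k⁻¹
            * eLpNorm f 2 (volume.restrict (Set.Ioo (0:ℝ) 1))) := by
        exact add_le_add hFeq.symm.le (mul_le_mul_right goal1 _)
    _ = ENNReal.ofReal (1 + k) * eLpNorm f 2 (volume.restrict (Set.Ioo (0:ℝ) 1)) := by
        rw [← mul_assoc, ← ENNReal.ofReal_mul (by positivity)]
        have hkk : k^2 * k⁻¹ = k := by field_simp
        rw [hkk, ENNReal.ofReal_add zero_le_one hk0.le, ENNReal.ofReal_one]
        ring
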